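/- Let H be an inner product space over ℂ, x, y ∈ H, and γ, Γ ∈ ℂ with Re(Γ·conj(γ)) > 0. If Re⟨Γy − x, x − γy⟩ ≥ 0, then ‖x‖²‖y‖² ≤ (1/4)·(|Γ + γ|² / Re(Γ·conj(γ)))·|⟨x,y⟩|². -/

import Mathlib

open scoped InnerProductSpace ComplexConjugate

theorem stmt_6 {E : Type*} [NormedAddCommGroup E] [InnerProductSpace ℂ E]
    (x y : E) (γ Γ : ℂ) (hΓγ : 0 < (Γ * conj γ).re)
    (h : 0 ≤ (⟪Γ • y - x, x - γ • y⟫_ℂ).re) :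
    ‖x‖ ^ 2 * ‖y‖ ^ 2 ≤
      (1 / 4) * (‖Γ + γ‖ ^ 2 / (Γ * conj γ).re) * ‖⟪x, y⟫_ℂ‖ ^ 2 := by
  have hyx : ⟪y, x⟫_ℂ = conj ⟪x, y⟫_ℂ := (inner_conj_symm y x).symm
  have hxx : ⟪x, x⟫_ℂ = ((‖x‖ ^ 2 : ℝ) : ℂ) := by exact_mod_cast inner_self_eq_norm_sq_to_K x
  have hyy : ⟪y, y⟫_ℂ = ((‖y‖ ^ 2 : ℝ) : ℂ) := by exact_mod_cast inner_self_eq_norm_sq_to_K y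
  have hre : ‖x‖ ^ 2 + (Γ * conj γ).re * ‖y‖ ^ 2 ≤ ((Γ + γ) * ⟪x, y⟫_ℂ).re := by
    simp only [inner_sub_left, inner_sub_right, inner_smul_left, inner_smul_right,
      hyx, hxx, hyy] at h
    set p := ⟪x, y⟫_ℂ
    simp only [Complex.sub_re, Complex.add_re, Complex.mul_re, Complex.sub_im,
      Complex.add_im, Complex.mul_im, Complex.conj_re, Complex.conj_im,
      Complex.ofReal_re, Complex.ofReal_im] at h ⊢
    nlinarith [h]
  have hle : ((Γ + γ) * ⟪x, y⟫_ℂ).re ≤ ‖Γ + γ‖ * ‖⟪x, y⟫_ℂ‖ := by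
    calc ((Γ + γ) * ⟪x, y⟫_ℂ).re ≤ ‖(Γ + γ) * ⟪x, y⟫_ℂ‖ := Complex.re_le_norm _
    _ = _ := norm_mul _ _
  have key : ‖x‖ ^ 2 + (Γ * conj γ).re * ‖y‖ ^ 2 ≤ ‖Γ + γ‖ * ‖⟪x, y⟫_ℂ‖ :=
    hre.trans hle
  have h0 : (0 : ℝ) ≤ ‖x‖ ^ 2 + (Γ * conj γ).re * ‖y‖ ^ 2 := by positivity
  have ksq := mul_self_le_mul_self h0 key
  have heq : (1 / 4) * (‖Γ + γ‖ ^ 2 / (Γ * conj γ).re) * ‖⟪x, y⟫_ℂ‖ ^ 2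
      = (‖Γ + γ‖ * ‖⟪x, y⟫_ℂ‖) ^ 2 / (4 * (Γ * conj γ).re) := by
    field_simp
  rw [heq, le_div_iff₀ (by positivity)]
  nlinarith [ksq, sq_nonneg (‖x‖ ^ 2 - (Γ * conj γ).re * ‖y‖ ^ 2)]
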